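/- Let λ, μ be partitions of length m such that |μ| − |λ| = 2k with k ∈ ℕ, set n = max(λ_1, μ_1), λ̂ = (n−λ_m, …, n−λ_1) and μ̂ = (n−μ_m, …, n−μ_1). Then u_{λ,μ}(q) = Σ_{δ∈D_k^m} c_δ^{D_m} q^k K^{A_m}_{λ̂, μ̂+δ}(q) and U_{λ,μ}(q) = Σ_{δ∈C_k^m} c_δ^{C_m} q^k K^{A_m}_{λ̂, μ̂+δ}(q). -/

import Mathlib

open scoped BigOperators

noncomputable section

/-- Integral weights of rank `m`, identified with `ℤ^m`. -/
abbrev Wt (m : ℕ) := Fin m → ℤ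

/-- Rational weights of rank `m` (needed for the half-integral `ρ` of type `B`). -/
abbrev QWt (m : ℕ) := Fin m → ℚ

/-- Coercion of an integral weight to a rational weight. -/
def castWt {m : ℕ} (β : Wt m) : QWt m := fun i => (β i : ℚ)

/-- The standard basis vector `ε_i` of `ℤ^m`. -/
def eps {m : ℕ} (i : Fin m) : Wt m := fun j => if j = i then 1 else 0

/-- `ρ_m = (m, m-1, ..., 1)`. -/
def rhoZ (m : ℕ) : Wt m := fun i => (m : ℤ) - (i : ℕ)

/-- `κ_m = (1, ..., 1)`. -/
def kappa (m : ℕ) : Wt m := fun _ => 1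

/-- A partition of length `m`: a weakly decreasing element of `ℕ^m` (written in `ℤ^m`). -/
def IsPart {m : ℕ} (lam : Wt m) : Prop := Antitone lam ∧ ∀ i, 0 ≤ lam i

/-- `|λ| = λ_1 + ⋯ + λ_m`. -/
def wtSum {m : ℕ} (lam : Wt m) : ℤ := ∑ i, lam i

/-- The conjugate partition, regarded as a partition of length `n`:
`λ'_j = #{i : λ_i ≥ j}` (with `j` one-based). -/
def conj {m : ℕ} (n : ℕ) (lam : Wt m) : Wt n :=
  fun j => ((Finset.univ.filter (fun i : Fin m => ((j : ℕ) : ℤ) < lam i)).card : ℤ)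

/-- The permutation action of `S_m` on `ℤ^m`. -/
def pact {m : ℕ} (σ : Equiv.Perm (Fin m)) (β : Wt m) : Wt m := β ∘ σ.symm

/-- The permutation action of `S_m` on `ℚ^m`. -/
def qpact {m : ℕ} (σ : Equiv.Perm (Fin m)) (β : QWt m) : QWt m := β ∘ σ.symm

/-- The dot action `σ ∘ α = σ(α + ρ_m) - ρ_m`. -/
def dotAct {m : ℕ} (σ : Equiv.Perm (Fin m)) (α : Wt m) : Wt m :=
  pact σ (α + rhoZ m) - rhoZ m

/-- The three root-system types considered in the paper. -/
inductive RT | B | C | D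
deriving DecidableEq

/-- The action of a signed permutation `(σ, ε)` on `ℚ^m`: the hyperoctahedral group
`W_{B_m} = W_{C_m}` consists of all such pairs. -/
def sact {m : ℕ} (σ : Equiv.Perm (Fin m)) (ε : Fin m → Bool) (β : QWt m) : QWt m :=
  fun i => (if ε i then -1 else 1) * β (σ.symm i)

/-- `(-1)^{l(w)}` for a signed permutation `w = (σ, ε)`: the sign character of the
hyperoctahedral group, which takes value `-1` on each Coxeter generator. -/
def ssign {m : ℕ} (σ : Equiv.Perm (Fin m)) (ε : Fin m → Bool) : ℤ :=
  (Equiv.Perm.sign σ : ℤ) * ∏ i, (if ε i then -1 else 1)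

/-- Which signed permutations belong to the Weyl group of type `g`: for `B` and `C` all of
them, for `D` only those changing an even number of signs. -/
def allowed (g : RT) {m : ℕ} (ε : Fin m → Bool) : Prop :=
  g = RT.D → (∏ i, (if ε i then (-1 : ℤ) else 1)) = 1

instance (g : RT) {m : ℕ} : DecidablePred (allowed g (m := m)) := by
  unfold allowed; infer_instance

/-- The Laurent polynomial ring `ℤ[x_1^{±1/2}, ..., x_m^{±1/2}]` (allowing all rational
exponents), realized as the group algebra of `ℚ^m`. -/
abbrev LQ (m : ℕ) := AddMonoidAlgebra ℤ (QWt m)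

/-- The monomial `x^β`. -/
def XQ {m : ℕ} (β : QWt m) : LQ m := AddMonoidAlgebra.single β 1

instance {m : ℕ} : IsDomain (LQ m) := NoZeroDivisors.to_isDomain _

/-- The fraction field of the Laurent polynomial ring, in which Schur functions live. -/
abbrev KK (m : ℕ) := FractionRing (LQ m)

def toK {m : ℕ} (p : LQ m) : KK m := algebraMap (LQ m) (KK m) p

/-- The half-sum of positive roots: `ρ_B = ρ_m - (1/2,…,1/2)`, `ρ_C = ρ_m`,
`ρ_D = ρ_m - (1,…,1)`. -/
def rhoG (g : RT) (m : ℕ) : QWt m :=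
  match g with
  | RT.B => fun i => ((m : ℚ) - (i : ℕ)) - 1/2
  | RT.C => fun i => (m : ℚ) - (i : ℕ)
  | RT.D => fun i => ((m : ℚ) - (i : ℕ)) - 1

/-- `a_β = Σ_{w ∈ W_g} (-1)^{l(w)} x^{w(β)}`. -/
def aalt (g : RT) {m : ℕ} (β : QWt m) : LQ m :=
  ∑ σ : Equiv.Perm (Fin m), ∑ ε ∈ Finset.univ.filter (allowed g),
    ssign σ ε • XQ (sact σ ε β)

/-- The Schur function `s_ν^g = a_{ν+ρ_g} / a_{ρ_g}`. -/
def SchurF (g : RT) {m : ℕ} (ν : QWt m) : KK m :=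
  toK (aalt g (ν + rhoG g m)) / toK (aalt g (rhoG g m))

/-- The one-row weight `(k, 0, …, 0)`. -/
def rowWt (m : ℕ) (k : ℤ) : QWt m := fun i => if (i : ℕ) = 0 then (k : ℚ) else 0

/-- The one-column weight `(1^p, 0^{m-p})`. -/
def colWt (m : ℕ) (p : ℤ) : QWt m := fun i => if ((i : ℕ) : ℤ) < p then 1 else 0

/-- `h_k^g = s_{(k,0,…,0)}^g` for `k ≥ 0`, and `0` for `k < 0`. -/
def hF (g : RT) (m : ℕ) (k : ℤ) : KK m := if 0 ≤ k then SchurF g (rowWt m k) else 0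

/-- `H_k^g = h_k^g + h_{k-2}^g + ⋯ + h_{k mod 2}^g` for `k ≥ 0`, and `0` for `k < 0`. -/
def HF (g : RT) (m : ℕ) (k : ℤ) : KK m :=
  if 0 ≤ k then ∑ j ∈ Finset.range (k.toNat / 2 + 1), hF g m (k - 2 * j) else 0

/-- `e_p^g = s^g_{(1^p,0^{m-p})}` for `0 ≤ p ≤ m`, `e_p^g = e^g_{2m-p}` for `m < p ≤ 2m`,
and `0` otherwise. -/
def eF (g : RT) (m : ℕ) (p : ℤ) : KK m :=
  if 0 ≤ p ∧ p ≤ (m : ℤ) then SchurF g (colWt m p)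
  else if (m : ℤ) < p ∧ p ≤ 2 * m then SchurF g (colWt m (2 * m - p))
  else 0

/-- `E_k^g = e_k^g + e_{k-2}^g + ⋯ + e_{k mod 2}^g` for `k ≥ 0`, and `0` for `k < 0`. -/
def EF (g : RT) (m : ℕ) (k : ℤ) : KK m :=
  if 0 ≤ k then ∑ j ∈ Finset.range (k.toNat / 2 + 1), eF g m (k - 2 * j) else 0

/-- The `m × m` determinant `u_α^g` (in the one-row characters `h^g`). -/
def uDet (g : RT) {m : ℕ} (α : Wt m) : KK m :=
  Matrix.det (Matrix.of fun i j : Fin m =>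
    if (j : ℕ) = 0 then hF g m (α i - (i : ℕ))
    else hF g m (α i - (i : ℕ) + (j : ℕ)) + hF g m (α i - (i : ℕ) - (j : ℕ)))

/-- The `n × n` determinant `v_β^g` (in the one-column characters `e^g` of rank `m`). -/
def vDet (g : RT) (m : ℕ) {n : ℕ} (β : Wt n) : KK m :=
  Matrix.det (Matrix.of fun i j : Fin n =>
    if (j : ℕ) = 0 then eF g m (β i - (i : ℕ))
    else eF g m (β i - (i : ℕ) + (j : ℕ)) + eF g m (β i - (i : ℕ) - (j : ℕ)))

/-- `h_α^g = h^g_{α_1} ⋯ h^g_{α_m}` (and similarly for arbitrary index length). -/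
def hProd (g : RT) (m : ℕ) {n : ℕ} (α : Wt n) : KK m := ∏ i, hF g m (α i)

def HProd (g : RT) (m : ℕ) {n : ℕ} (α : Wt n) : KK m := ∏ i, HF g m (α i)

def eProd (g : RT) (m : ℕ) {n : ℕ} (α : Wt n) : KK m := ∏ i, eF g m (α i)

def EProd (g : RT) (m : ℕ) {n : ℕ} (α : Wt n) : KK m := ∏ i, EF g m (α i)

/-- The Laurent polynomial ring `ℤ[x_1^{±1}, ..., x_m^{±1}]`, realized as the group
algebra of `ℤ^m`. -/
abbrev LZ (m : ℕ) := AddMonoidAlgebra ℤ (Wt m)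

/-- The monomial `x^β`. -/
def XZ {m : ℕ} (β : Wt m) : LZ m := AddMonoidAlgebra.single β 1

/-- `φ_m = ∏_{1≤i<j≤m} (1 - x_i/x_j) · ∏_{1≤r<s≤m} (1 - 1/(x_r x_s))`; its coefficients
are the function `a` (resp. `f_{q=1}` up to expansion conventions). -/
def phiSmall (m : ℕ) : LZ m :=
  (∏ p ∈ Finset.univ.filter (fun p : Fin m × Fin m => p.1 < p.2),
      (1 - XZ (eps p.1 - eps p.2))) *
  (∏ p ∈ Finset.univ.filter (fun p : Fin m × Fin m => p.1 < p.2),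
      (1 - XZ (-(eps p.1 + eps p.2))))

/-- `Φ_m = ∏_{1≤i<j≤m} (1 - x_i/x_j) · ∏_{1≤r≤s≤m} (1 - 1/(x_r x_s))`. -/
def phiBig (m : ℕ) : LZ m :=
  (∏ p ∈ Finset.univ.filter (fun p : Fin m × Fin m => p.1 < p.2),
      (1 - XZ (eps p.1 - eps p.2))) *
  (∏ p ∈ Finset.univ.filter (fun p : Fin m × Fin m => p.1 ≤ p.2),
      (1 - XZ (-(eps p.1 + eps p.2))))

/-- The coefficient `a(γ)` of `x^γ` in `φ_m`. -/
def coeffSmall (m : ℕ) (γ : Wt m) : ℤ := (phiSmall m).coeff γ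

/-- The coefficient `A(γ)` of `x^γ` in `Φ_m`. -/
def coeffBig (m : ℕ) (γ : Wt m) : ℤ := (phiBig m).coeff γ

/-- The generic `q`-partition function attached to a finite family `v` of vectors:
the coefficient of `q^d` counts the families `(n_i)` of nonnegative integers with
`Σ n_i = d` and `Σ n_i v_i = β`.  This encodes the coefficient of `x^β` in the formal
series expansion of `∏_i (1 - q x^{v_i})^{-1}` as a power series in `q`. -/
def PqPS {m : ℕ} {ι : Type} [Fintype ι] (v : ι → Wt m) (β : QWt m) : PowerSeries ℤ :=
  PowerSeries.mk fun d =>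
    (Nat.card {n : ι → ℕ // (∑ i, n i) = d ∧ castWt (∑ i, (n i : ℤ) • v i) = β} : ℤ)

/-- The specialization at `q = 1` of `PqPS`: the number of ways to write `β` as a
nonnegative integral combination of the vectors `v_i`. -/
def POne {m : ℕ} {ι : Type} [Fintype ι] (v : ι → Wt m) (β : Wt m) : ℤ :=
  (Nat.card {n : ι → ℕ // (∑ i, (n i : ℤ) • v i) = β} : ℤ)

/-- Index type for the pairs `1 ≤ i < j ≤ m`. -/
abbrev IdxLT (m : ℕ) := {p : Fin m × Fin m // p.1 < p.2}

/-- Index type for the pairs `1 ≤ i ≤ j ≤ m`. -/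
abbrev IdxLE (m : ℕ) := {p : Fin m × Fin m // p.1 ≤ p.2}

/-- The positive roots `ε_i - ε_j` (`i < j`) of type `A_m`. -/
def rootsA (m : ℕ) : IdxLT m → Wt m := fun p => eps p.1.1 - eps p.1.2

/-- The positive roots of type `B_m`. -/
def rootsB (m : ℕ) : IdxLT m ⊕ IdxLT m ⊕ Fin m → Wt m
  | .inl p => eps p.1.1 - eps p.1.2
  | .inr (.inl p) => eps p.1.1 + eps p.1.2
  | .inr (.inr i) => eps i

/-- The positive roots of type `C_m` (note `2ε_i = ε_i + ε_i`). -/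
def rootsC (m : ℕ) : IdxLT m ⊕ IdxLE m → Wt m
  | .inl p => eps p.1.1 - eps p.1.2
  | .inr p => eps p.1.1 + eps p.1.2

/-- The positive roots of type `D_m`. -/
def rootsD (m : ℕ) : IdxLT m ⊕ IdxLT m → Wt m
  | .inl p => eps p.1.1 - eps p.1.2
  | .inr p => eps p.1.1 + eps p.1.2

/-- The vectors `ε_i - ε_j` (`i < j`) and `-(ε_r + ε_s)` (`r < s`), whose `q`-partition
function is `f_q`. -/
def vfSmall (m : ℕ) : IdxLT m ⊕ IdxLT m → Wt m
  | .inl p => eps p.1.1 - eps p.1.2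
  | .inr p => -(eps p.1.1 + eps p.1.2)

/-- The vectors `ε_i - ε_j` (`i < j`) and `-(ε_r + ε_s)` (`r ≤ s`), whose `q`-partition
function is `F_q`. -/
def vfBig (m : ℕ) : IdxLT m ⊕ IdxLE m → Wt m
  | .inl p => eps p.1.1 - eps p.1.2
  | .inr p => -(eps p.1.1 + eps p.1.2)

/-- `f_q`. -/
def fq {m : ℕ} (β : Wt m) : PowerSeries ℤ := PqPS (vfSmall m) (castWt β)

/-- `F_q`. -/
def Fq {m : ℕ} (β : Wt m) : PowerSeries ℤ := PqPS (vfBig m) (castWt β)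

/-- The `q`-analogue of Kostant's partition function, type `A_m`. -/
def PqA {m : ℕ} (β : QWt m) : PowerSeries ℤ := PqPS (rootsA m) β

/-- The `q`-analogue of Kostant's partition function, types `B_m`, `C_m`, `D_m`. -/
def PqG (g : RT) {m : ℕ} (β : QWt m) : PowerSeries ℤ :=
  match g with
  | RT.B => PqPS (rootsB m) β
  | RT.C => PqPS (rootsC m) β
  | RT.D => PqPS (rootsD m) β

/-- The Kostka–Foulkes polynomial
`K^g_{λ,μ}(q) = Σ_{w ∈ W_g} (-1)^{l(w)} P_q^g(w(λ+ρ_g) - (μ+ρ_g))`. -/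
def KF (g : RT) {m : ℕ} (lam mu : QWt m) : PowerSeries ℤ :=
  ∑ σ : Equiv.Perm (Fin m), ∑ ε ∈ Finset.univ.filter (allowed g),
    ssign σ ε • PqG g (sact σ ε (lam + rhoG g m) - (mu + rhoG g m))

/-- The Kostka–Foulkes polynomial of type `A_m`,
`K^{A_m}_{λ,γ}(q) = Σ_{σ ∈ S_m} (-1)^{l(σ)} P_q^{A_m}(σ(λ+ρ_m) - (γ+ρ_m))`,
defined for arbitrary `γ ∈ ℤ^m`. -/
def KFA {m : ℕ} (lam gamma : Wt m) : PowerSeries ℤ :=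
  ∑ σ : Equiv.Perm (Fin m),
    (Equiv.Perm.sign σ : ℤ) • PqA (castWt (pact σ (lam + rhoZ m) - (gamma + rhoZ m)))

/-- `u_{λ,μ}(q) = Σ_{σ ∈ S_m} (-1)^{l(σ)} f_q(σ(λ+ρ_m) - μ - ρ_m)`. -/
def uP {m : ℕ} (lam mu : Wt m) : PowerSeries ℤ :=
  ∑ σ : Equiv.Perm (Fin m),
    (Equiv.Perm.sign σ : ℤ) • fq (pact σ (lam + rhoZ m) - mu - rhoZ m)

/-- `U_{λ,μ}(q) = Σ_{σ ∈ S_m} (-1)^{l(σ)} F_q(σ(λ+ρ_m) - μ - ρ_m)`. -/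
def UP {m : ℕ} (lam mu : Wt m) : PowerSeries ℤ :=
  ∑ σ : Equiv.Perm (Fin m),
    (Equiv.Perm.sign σ : ℤ) • Fq (pact σ (lam + rhoZ m) - mu - rhoZ m)

/-- `f_q` specialized at `q = 1`. -/
def fOne {m : ℕ} (β : Wt m) : ℤ := POne (vfSmall m) β

/-- `F_q` specialized at `q = 1`. -/
def FOne {m : ℕ} (β : Wt m) : ℤ := POne (vfBig m) β

/-- `u_{λ,μ}(1)`. -/
def uP1 {m : ℕ} (lam mu : Wt m) : ℤ :=
  ∑ σ : Equiv.Perm (Fin m),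
    (Equiv.Perm.sign σ : ℤ) * fOne (pact σ (lam + rhoZ m) - mu - rhoZ m)

/-- `U_{λ,μ}(1)`. -/
def UP1 {m : ℕ} (lam mu : Wt m) : ℤ :=
  ∑ σ : Equiv.Perm (Fin m),
    (Equiv.Perm.sign σ : ℤ) * FOne (pact σ (lam + rhoZ m) - mu - rhoZ m)

/-- `λ̂ = (n - λ_m, …, n - λ_1)`. -/
def hatP {m : ℕ} (n : ℤ) (lam : Wt m) : Wt m := fun i => n - lam i.rev

/-- The involution `I(α_1, …, α_m) = (-α_m, …, -α_1)`. -/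
def invI {m : ℕ} (α : Wt m) : Wt m := fun i => -α i.rev

/-- `σ*`, defined by `σ*(k) = σ(m - k + 1)`. -/
def starPerm {m : ℕ} (σ : Equiv.Perm (Fin m)) : Equiv.Perm (Fin m) :=
  (Fin.revPerm).trans σ

/-- The number of ways to write `β = Σ_{1≤r≤s≤m} e_{r,s} (ε_r + ε_s)`, `e_{r,s} ∈ ℕ`. -/
def cC (m : ℕ) (β : Wt m) : ℕ :=
  Nat.card {e : IdxLE m → ℕ // (∑ p, (e p : ℤ) • (eps p.1.1 + eps p.1.2)) = β}

/-- The number of ways to write `β = Σ_{1≤r<s≤m} e_{r,s} (ε_r + ε_s)`, `e_{r,s} ∈ ℕ`. -/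
def cD (m : ℕ) (β : Wt m) : ℕ :=
  Nat.card {e : IdxLT m → ℕ // (∑ p, (e p : ℤ) • (eps p.1.1 + eps p.1.2)) = β}

/-- The set `C_k^m`. -/
def setC (m k : ℕ) : Set (Wt m) :=
  {β | (∃ e : IdxLE m → ℕ, (∑ p, (e p : ℤ) • (eps p.1.1 + eps p.1.2)) = β) ∧
       wtSum β = 2 * k}

/-- The set `D_k^m`. -/
def setD (m k : ℕ) : Set (Wt m) :=
  {β | (∃ e : IdxLT m → ℕ, (∑ p, (e p : ℤ) • (eps p.1.1 + eps p.1.2)) = β) ∧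
       wtSum β = 2 * k}



section Aux19

open Finset

variable {m : ℕ}

lemma castWt_injective : Function.Injective (castWt (m := m)) := by
  intro a b h
  funext i
  have := congrFun h i
  simpa [castWt] using this

lemma wtSum_lincomb {ι : Type} [Fintype ι] (c : ι → ℤ) (v : ι → Wt m) :
    wtSum (∑ p, c p • v p) = ∑ p, c p * wtSum (v p) := by
  simp only [wtSum, Finset.sum_apply, Pi.smul_apply, smul_eq_mul, Finset.mul_sum]
  exact Finset.sum_comm

lemma wtSum_addW (a b : Wt m) : wtSum (a + b) = wtSum a + wtSum b := by
  simp [wtSum, Finset.sum_add_distrib]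

lemma wtSum_subW (a b : Wt m) : wtSum (a - b) = wtSum a - wtSum b := by
  simp [wtSum, Finset.sum_sub_distrib]

lemma wtSum_eps (i : Fin m) : wtSum (eps i) = 1 := by
  simp [wtSum, eps]

lemma wtSum_rootsA (p : IdxLT m) : wtSum (rootsA m p) = 0 := by
  simp [rootsA, wtSum_subW, wtSum_eps]

lemma wtSum_pact (σ : Equiv.Perm (Fin m)) (α : Wt m) : wtSum (pact σ α) = wtSum α := by
  simpa [wtSum, pact] using Equiv.sum_comp σ.symm α

lemma coeff_PqPS {ι : Type} [Fintype ι] (v : ι → Wt m) (β : Wt m) (d : ℕ) :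
    (PowerSeries.coeff d) (PqPS v (castWt β)) =
      (Nat.card {n : ι → ℕ // (∑ i, n i) = d ∧ (∑ i, (n i : ℤ) • v i) = β} : ℤ) := by
  rw [PqPS, PowerSeries.coeff_mk]
  congr 1
  exact Nat.card_congr (Equiv.subtypeEquivRight fun n =>
    and_congr_right fun _ => ⟨fun h => castWt_injective h, fun h => h ▸ rfl⟩)

lemma finite_solset {ι : Type} [Fintype ι] (d : ℕ) (P : (ι → ℕ) → Prop) :
    Finite {n : ι → ℕ // (∑ i, n i) = d ∧ P n} := by
  have hb : ∀ x : {n : ι → ℕ // (∑ i, n i) = d ∧ P n}, ∀ i, x.1 i < d + 1 := by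
    intro x i
    have h := Finset.single_le_sum (f := x.1) (fun j _ => Nat.zero_le _) (Finset.mem_univ i)
    omega
  exact Finite.of_injective (fun x => (fun i => (⟨x.1 i, hb x i⟩ : Fin (d + 1))))
    (by
      intro a b h
      apply Subtype.ext
      funext i
      exact congrArg Fin.val (congrFun h i))

lemma natCard_sigma {ι : Type} [Fintype ι] (f : ι → Type) [∀ i, Finite (f i)] :
    Nat.card (Σ i, f i) = ∑ i, Nat.card (f i) := by
  classical
  have : ∀ i, Fintype (f i) := fun i => Fintype.ofFinite _
  simp [Nat.card_eq_fintype_card]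

end Aux19


section Core19

open Finset

lemma natCard_partition {α β : Type*} [Finite α] (T : Finset β) (φ : α → β)
    (h : ∀ x, φ x ∈ T) :
    Nat.card α = ∑ b ∈ T, Nat.card {x : α // φ x = b} := by
  classical
  cases nonempty_fintype α
  have h1 := Finset.card_eq_sum_card_fiberwise (s := (Finset.univ : Finset α)) (t := T)
    (f := φ) (fun x _ => h x)
  rw [Nat.card_eq_fintype_card, ← Finset.card_univ, h1]
  exact Finset.sum_congr rfl fun b _ => by
    rw [Nat.card_eq_fintype_card, Fintype.card_subtype]

lemma core19 {m : ℕ} {κ : Type} [Fintype κ] (pos : κ → Wt m)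
    (hpos : ∀ j, wtSum (pos j) = 2) (k : ℕ)
    (hfin : {δ : Wt m | (∃ e : κ → ℕ, (∑ p, (e p : ℤ) • pos p) = δ) ∧
      wtSum δ = 2 * (k : ℤ)}.Finite)
    (v : IdxLT m ⊕ κ → Wt m) (hv1 : ∀ p, v (.inl p) = rootsA m p)
    (hv2 : ∀ j, v (.inr j) = - pos j)
    (β : Wt m) (hβ : wtSum β = -(2 * (k : ℤ))) :
    PqPS v (castWt β) =
      PowerSeries.X ^ k * ∑ δ ∈ hfin.toFinset,
        (Nat.card {e : κ → ℕ // (∑ p, (e p : ℤ) • pos p) = δ} : ℤ) •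
          PqA (castWt (β + δ)) := by
  classical
  -- the sum of the e-part is always k
  have keyE : ∀ (e : κ → ℕ), ∀ δ : Wt m, (∑ p, (e p : ℤ) • pos p) = δ →
      wtSum δ = 2 * (k : ℤ) → (∑ j, e j) = k := by
    intro e δ hδ hs
    have h1 : wtSum (∑ p, (e p : ℤ) • pos p) = 2 * (k : ℤ) := by rw [hδ, hs]
    rw [wtSum_lincomb] at h1
    simp only [hpos] at h1
    have h2 : (2 : ℤ) * (∑ j, (e j : ℤ)) = 2 * (k : ℤ) := by
      rw [Finset.mul_sum, ← h1]
      exact Finset.sum_congr rfl fun j _ => by ring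
    have h3 : (∑ j, (e j : ℤ)) = (k : ℤ) := by linarith
    exact_mod_cast h3
  -- splitting a solution over the sum type
  have split : ∀ n : (IdxLT m ⊕ κ) → ℕ, (∑ i, (n i : ℤ) • v i) =
      (∑ p, (n (.inl p) : ℤ) • rootsA m p) - (∑ j, (n (.inr j) : ℤ) • pos j) := by
    intro n
    rw [Fintype.sum_sum_type, sub_eq_add_neg, ← Finset.sum_neg_distrib]
    congr 1
    · exact Finset.sum_congr rfl fun p _ => by rw [hv1]
    · exact Finset.sum_congr rfl fun j _ => by rw [hv2, smul_neg]
  -- the e-part of any solution for β sums to k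
  have keyN : ∀ n : (IdxLT m ⊕ κ) → ℕ, (∑ i, (n i : ℤ) • v i) = β →
      (∑ j, n (.inr j)) = k := by
    intro n hn
    rw [split] at hn
    have h1 : wtSum ((∑ p, (n (.inl p) : ℤ) • rootsA m p) - (∑ j, (n (.inr j) : ℤ) • pos j))
        = -(2 * (k : ℤ)) := by rw [hn, hβ]
    rw [wtSum_subW, wtSum_lincomb, wtSum_lincomb] at h1
    simp only [wtSum_rootsA, hpos, mul_zero, Finset.sum_const_zero, zero_sub, neg_inj] at h1
    have h2 : (2 : ℤ) * (∑ j, (n (.inr j) : ℤ)) = 2 * (k : ℤ) := by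
      rw [Finset.mul_sum, ← h1]
      exact Finset.sum_congr rfl fun j _ => by ring
    have h3 : (∑ j, (n (.inr j) : ℤ)) = (k : ℤ) := by linarith
    exact_mod_cast h3
  ext d
  rw [PowerSeries.coeff_X_pow_mul', coeff_PqPS]
  by_cases hd : k ≤ d
  · rw [if_pos hd, map_sum]
    haveI hNfin : Finite {n : (IdxLT m ⊕ κ) → ℕ //
        (∑ i, n i) = d ∧ (∑ i, (n i : ℤ) • v i) = β} :=
      finite_solset d _
    have hmemT : ∀ n : (IdxLT m ⊕ κ) → ℕ, (∑ i, (n i : ℤ) • v i) = β →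
        (∑ j, (n (.inr j) : ℤ) • pos j) ∈ hfin.toFinset := by
      intro n hn
      rw [Set.Finite.mem_toFinset]
      refine ⟨⟨fun j => n (.inr j), rfl⟩, ?_⟩
      rw [wtSum_lincomb]
      simp only [hpos]
      have hks : ((k : ℤ)) = ∑ j, (n (.inr j) : ℤ) := by
        exact_mod_cast (keyN n hn).symm
      rw [hks, Finset.mul_sum]
      exact Finset.sum_congr rfl fun j _ => by ring
    have hpart := natCard_partition (α := {n : (IdxLT m ⊕ κ) → ℕ //
        (∑ i, n i) = d ∧ (∑ i, (n i : ℤ) • v i) = β}) hfin.toFinset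
      (fun x => (∑ j, (x.1 (.inr j) : ℤ) • pos j)) (fun x => hmemT x.1 x.2.2)
    have hfib : ∀ δ ∈ hfin.toFinset,
        Nat.card {x : {n : (IdxLT m ⊕ κ) → ℕ //
            (∑ i, n i) = d ∧ (∑ i, (n i : ℤ) • v i) = β} //
            (∑ j, (x.1 (.inr j) : ℤ) • pos j) = δ} =
        Nat.card {e : κ → ℕ // (∑ p, (e p : ℤ) • pos p) = δ} *
        Nat.card {a : IdxLT m → ℕ // (∑ p, a p) = d - k ∧
            (∑ p, (a p : ℤ) • rootsA m p) = β + δ} := by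
      intro δ hδ
      have hδT : wtSum δ = 2 * (k : ℤ) := ((hfin.mem_toFinset).mp hδ).2
      rw [← Nat.card_prod]
      apply Nat.card_congr
      have dir1 : ∀ (n : (IdxLT m ⊕ κ) → ℕ), (∑ i, n i) = d →
          (∑ i, (n i : ℤ) • v i) = β → (∑ j, (n (.inr j) : ℤ) • pos j) = δ →
          (∑ p, n (.inl p)) = d - k ∧ (∑ p, (n (.inl p) : ℤ) • rootsA m p) = β + δ := by
        intro n hn1 hn2 hn3
        constructor
        · rw [Fintype.sum_sum_type] at hn1
          have h2 : (∑ j, n (.inr j)) = k := keyE _ δ hn3 hδT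
          rw [h2] at hn1
          exact Nat.eq_sub_of_add_eq hn1
        · have h1 := (split n).symm.trans hn2
          rw [hn3] at h1
          exact eq_add_of_sub_eq h1
      have dir2 : ∀ (e : κ → ℕ) (a : IdxLT m → ℕ), (∑ j, (e j : ℤ) • pos j) = δ →
          (∑ p, a p) = d - k → (∑ p, (a p : ℤ) • rootsA m p) = β + δ →
          (∑ i, (Sum.elim a e) i) = d ∧ (∑ i, ((Sum.elim a e i : ℕ) : ℤ) • v i) = β := by
        intro e a he ha1 ha2
        constructor
        · rw [Fintype.sum_sum_type]
          simp only [Sum.elim_inl, Sum.elim_inr]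
          have h2 : (∑ j, e j) = k := keyE _ δ he hδT
          rw [ha1, h2]
          exact Nat.sub_add_cancel hd
        · rw [split]
          simp only [Sum.elim_inl, Sum.elim_inr]
          rw [ha2, he]
          ring
      refine
        { toFun := fun x => (⟨fun j => x.1.1 (.inr j), x.2⟩,
            ⟨fun p => x.1.1 (.inl p), (dir1 x.1.1 x.1.2.1 x.1.2.2 x.2).1,
              (dir1 x.1.1 x.1.2.1 x.1.2.2 x.2).2⟩),
          invFun := fun y => ⟨⟨Sum.elim y.2.1 y.1.1,
              (dir2 y.1.1 y.2.1 y.1.2 y.2.2.1 y.2.2.2).1,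
              (dir2 y.1.1 y.2.1 y.1.2 y.2.2.1 y.2.2.2).2⟩, y.1.2⟩,
          left_inv := ?_, right_inv := ?_ }
      · rintro ⟨⟨n, hn⟩, hx⟩
        apply Subtype.ext
        apply Subtype.ext
        funext x
        cases x <;> rfl
      · rintro ⟨⟨e, he⟩, ⟨a, ha⟩⟩
        refine Prod.ext ?_ ?_
        · apply Subtype.ext; funext j; rfl
        · apply Subtype.ext; funext p; rfl
    rw [hpart, Nat.cast_sum]
    refine Finset.sum_congr rfl fun δ hδ => ?_
    have hc : (PowerSeries.coeff (d - k)) (PqA (castWt (β + δ))) =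
        (Nat.card {a : IdxLT m → ℕ // (∑ p, a p) = d - k ∧
          (∑ p, (a p : ℤ) • rootsA m p) = β + δ} : ℤ) :=
      coeff_PqPS (rootsA m) (β + δ) (d - k)
    rw [map_zsmul, hc, hfib δ hδ, Nat.cast_mul, smul_eq_mul]
  · rw [if_neg hd]
    have hempty : IsEmpty {n : (IdxLT m ⊕ κ) → ℕ // (∑ i, n i) = d ∧
        (∑ i, (n i : ℤ) • v i) = β} := by
      constructor
      rintro ⟨n, hn1, hn2⟩
      have hk2 := keyN n hn2
      rw [Fintype.sum_sum_type] at hn1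
      have h3 : (∑ j, n (.inr j)) ≤ d := by omega
      omega
    rw [Nat.card_of_isEmpty]
    simp

end Core19


section Rev19

open Finset

variable {m : ℕ}

/-- Reversal of coordinates. -/
def revW (α : Wt m) : Wt m := fun i => α i.rev

lemma revW_revW (α : Wt m) : revW (revW α) = α := by
  funext i; simp [revW, Fin.rev_rev]

lemma revW_lincomb {ι : Type} [Fintype ι] (c : ι → ℤ) (w : ι → Wt m) :
    (∑ p, c p • revW (w p)) = revW (∑ p, c p • w p) := by
  funext i
  simp [revW, Finset.sum_apply]

lemma wtSum_revW (α : Wt m) : wtSum (revW α) = wtSum α := by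
  simpa [wtSum, revW] using Equiv.sum_comp Fin.revPerm α

lemma revW_eps (r : Fin m) : revW (eps r) = eps r.rev := by
  funext i
  simp [revW, eps, Fin.rev_eq_iff]

lemma invI_invI (α : Wt m) : invI (invI α) = α := by
  funext i; simp [invI, Fin.rev_rev]

lemma invI_lincomb {ι : Type} [Fintype ι] (c : ι → ℤ) (w : ι → Wt m) :
    (∑ p, c p • invI (w p)) = invI (∑ p, c p • w p) := by
  funext i
  simp [invI, Finset.sum_apply, mul_neg, Finset.sum_neg_distrib]

/-- The pair-reversing involution on `IdxLT m`. -/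
def pairRevLT (m : ℕ) : IdxLT m ≃ IdxLT m where
  toFun p := ⟨(p.1.2.rev, p.1.1.rev), Fin.rev_lt_rev.mpr p.2⟩
  invFun p := ⟨(p.1.2.rev, p.1.1.rev), Fin.rev_lt_rev.mpr p.2⟩
  left_inv p := by apply Subtype.ext; simp [Fin.rev_rev]
  right_inv p := by apply Subtype.ext; simp [Fin.rev_rev]

/-- The pair-reversing involution on `IdxLE m`. -/
def pairRevLE (m : ℕ) : IdxLE m ≃ IdxLE m where
  toFun p := ⟨(p.1.2.rev, p.1.1.rev), Fin.rev_le_rev.mpr p.2⟩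
  invFun p := ⟨(p.1.2.rev, p.1.1.rev), Fin.rev_le_rev.mpr p.2⟩
  left_inv p := by apply Subtype.ext; simp [Fin.rev_rev]
  right_inv p := by apply Subtype.ext; simp [Fin.rev_rev]

lemma rootsA_pairRevLT (p : IdxLT m) : rootsA m (pairRevLT m p) = invI (rootsA m p) := by
  funext i
  simp only [rootsA, pairRevLT, invI, Pi.sub_apply, eps, Equiv.coe_fn_mk]
  have h1 : (i = p.1.2.rev) ↔ (i.rev = p.1.2) := by
    constructor
    · intro h; rw [h, Fin.rev_rev]
    · intro h; rw [← h, Fin.rev_rev]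
  have h2 : (i = p.1.1.rev) ↔ (i.rev = p.1.1) := by
    constructor
    · intro h; rw [h, Fin.rev_rev]
    · intro h; rw [← h, Fin.rev_rev]
  rw [if_congr h1 rfl rfl, if_congr h2 rfl rfl]
  ring

lemma PqA_invI (γ : Wt m) : PqA (castWt (invI γ)) = PqA (castWt γ) := by
  ext d
  have h1 : (PowerSeries.coeff d) (PqA (castWt (invI γ))) =
      (Nat.card {a : IdxLT m → ℕ // (∑ p, a p) = d ∧
        (∑ p, (a p : ℤ) • rootsA m p) = invI γ} : ℤ) := coeff_PqPS (rootsA m) (invI γ) d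
  have h2 : (PowerSeries.coeff d) (PqA (castWt γ)) =
      (Nat.card {a : IdxLT m → ℕ // (∑ p, a p) = d ∧
        (∑ p, (a p : ℤ) • rootsA m p) = γ} : ℤ) := coeff_PqPS (rootsA m) γ d
  rw [h1, h2]
  congr 1
  apply Nat.card_congr
  have key : ∀ a : IdxLT m → ℕ,
      (∑ p, ((a (pairRevLT m p) : ℕ) : ℤ) • rootsA m p) =
        invI (∑ p, (a p : ℤ) • rootsA m p) := by
    intro a
    rw [← invI_lincomb, ← Equiv.sum_comp (pairRevLT m)
      (fun p => ((a p : ℕ) : ℤ) • invI (rootsA m p))]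
    exact Finset.sum_congr rfl fun p _ => by rw [rootsA_pairRevLT, invI_invI]
  have dirA : ∀ a : IdxLT m → ℕ, (∑ p, a p) = d → (∑ p, (a p : ℤ) • rootsA m p) = invI γ →
      (∑ p, a (pairRevLT m p)) = d ∧
      (∑ p, ((a (pairRevLT m p) : ℕ) : ℤ) • rootsA m p) = γ := by
    intro a h1 h2
    refine ⟨(Equiv.sum_comp (pairRevLT m) a).trans h1, (key a).trans ?_⟩
    rw [h2, invI_invI]
  have dirB : ∀ a : IdxLT m → ℕ, (∑ p, a p) = d → (∑ p, (a p : ℤ) • rootsA m p) = γ →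
      (∑ p, a (pairRevLT m p)) = d ∧
      (∑ p, ((a (pairRevLT m p) : ℕ) : ℤ) • rootsA m p) = invI γ := by
    intro a h1 h2
    exact ⟨(Equiv.sum_comp (pairRevLT m) a).trans h1, (key a).trans (by rw [h2])⟩
  have hinvol : ∀ p : IdxLT m, pairRevLT m (pairRevLT m p) = p := by
    intro p; apply Subtype.ext; simp [pairRevLT, Fin.rev_rev]
  refine
    { toFun := fun x => ⟨fun p => x.1 (pairRevLT m p),
        (dirA x.1 x.2.1 x.2.2).1, (dirA x.1 x.2.1 x.2.2).2⟩,
      invFun := fun x => ⟨fun p => x.1 (pairRevLT m p),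
        (dirB x.1 x.2.1 x.2.2).1, (dirB x.1 x.2.1 x.2.2).2⟩,
      left_inv := ?_, right_inv := ?_ }
  · rintro ⟨a, ha⟩
    apply Subtype.ext
    funext p
    exact congrArg a (hinvol p)
  · rintro ⟨a, ha⟩
    apply Subtype.ext
    funext p
    exact congrArg a (hinvol p)

/-- Conjugation of a permutation by the reversal. -/
def revConj (σ : Equiv.Perm (Fin m)) : Equiv.Perm (Fin m) :=
  (Fin.revPerm.trans σ).trans Fin.revPerm

lemma revConj_involutive : Function.Involutive (revConj (m := m)) := by
  intro σ
  ext i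
  simp [revConj, Fin.rev_rev]

lemma sign_revConj (σ : Equiv.Perm (Fin m)) :
    Equiv.Perm.sign (revConj σ) = Equiv.Perm.sign σ := by
  have h : revConj σ = Fin.revPerm * σ * Fin.revPerm := by
    ext i; rfl
  have h2 : (Fin.revPerm : Equiv.Perm (Fin m)) * Fin.revPerm = 1 := by
    ext i; simp [Fin.rev_rev]
  rw [h, map_mul, map_mul]
  rw [mul_comm (Equiv.Perm.sign (Fin.revPerm : Equiv.Perm (Fin m))) (Equiv.Perm.sign σ),
    mul_assoc, ← map_mul, h2, map_one, mul_one]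

lemma arg_eq (lam mu δ : Wt m) (n : ℤ) (σ : Equiv.Perm (Fin m)) :
    pact (revConj σ) (hatP n lam + rhoZ m) - ((hatP n mu + revW δ) + rhoZ m)
      = invI (pact σ (lam + rhoZ m) - mu - rhoZ m + δ) := by
  funext i
  have hrc : (revConj σ).symm i = Fin.rev (σ.symm (Fin.rev i)) := rfl
  simp only [pact, invI, hatP, revW, rhoZ, Pi.add_apply, Pi.sub_apply, Function.comp_apply,
    hrc, Fin.rev_rev]
  have h1 : ((Fin.rev (σ.symm (Fin.rev i)) : ℕ) : ℤ) =
      (m : ℤ) - 1 - ((σ.symm (Fin.rev i) : ℕ) : ℤ) := by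
    have := (σ.symm (Fin.rev i)).isLt
    rw [Fin.val_rev]
    omega
  have h2 : ((Fin.rev i : ℕ) : ℤ) = (m : ℤ) - 1 - ((i : ℕ) : ℤ) := by
    have := i.isLt
    rw [Fin.val_rev]
    omega
  rw [h1, h2]
  ring

lemma lemB (lam mu : Wt m) (n : ℤ) (δ : Wt m) :
    KFA (hatP n lam) (hatP n mu + revW δ) =
      ∑ σ : Equiv.Perm (Fin m), (Equiv.Perm.sign σ : ℤ) •
        PqA (castWt (pact σ (lam + rhoZ m) - mu - rhoZ m + δ)) := by
  rw [KFA]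
  refine (Fintype.sum_bijective revConj revConj_involutive.bijective _ _ fun σ => ?_).symm
  rw [sign_revConj]
  congr 1
  rw [arg_eq lam mu δ n σ, PqA_invI]

end Rev19


section Assemble19

open Finset

variable {m : ℕ}

lemma setFin {κ : Type} [Fintype κ] (pos : κ → Wt m) (hpos2 : ∀ j i, 0 ≤ pos j i) (k : ℕ) :
    {δ : Wt m | (∃ e : κ → ℕ, (∑ p, (e p : ℤ) • pos p) = δ) ∧
      wtSum δ = 2 * (k : ℤ)}.Finite := by
  classical
  apply Set.Finite.subset (Finset.finite_toSet
    (Finset.Icc (0 : Wt m) (fun _ => (2 * (k : ℤ)))))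
  rintro δ ⟨⟨e, he⟩, hs⟩
  simp only [Finset.coe_Icc, Set.mem_Icc]
  have hnn : ∀ i, 0 ≤ δ i := by
    intro i
    rw [← he]
    simp only [Finset.sum_apply, Pi.smul_apply, smul_eq_mul]
    exact Finset.sum_nonneg fun p _ => mul_nonneg (Int.natCast_nonneg _) (hpos2 p i)
  refine ⟨Pi.le_def.mpr fun i => hnn i, Pi.le_def.mpr fun i => ?_⟩
  have h1 : δ i ≤ wtSum δ :=
    Finset.single_le_sum (f := δ) (fun j _ => hnn j) (Finset.mem_univ i)
  rw [hs] at h1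
  exact h1

lemma assemble {κ : Type} [Fintype κ] (pos : κ → Wt m)
    (hpos : ∀ j, wtSum (pos j) = 2) (hpos2 : ∀ j i, 0 ≤ pos j i)
    (prv : Equiv.Perm κ) (hprv : ∀ j, pos (prv j) = revW (pos j))
    (v : IdxLT m ⊕ κ → Wt m) (hv1 : ∀ p, v (.inl p) = rootsA m p)
    (hv2 : ∀ j, v (.inr j) = - pos j)
    (lam mu : Wt m) (k : ℕ) (hk : wtSum mu - wtSum lam = 2 * (k : ℤ)) (n : ℤ) :
    (∑ σ : Equiv.Perm (Fin m), (Equiv.Perm.sign σ : ℤ) •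
        PqPS v (castWt (pact σ (lam + rhoZ m) - mu - rhoZ m)))
      = ∑ᶠ δ ∈ {δ : Wt m | (∃ e : κ → ℕ, (∑ p, (e p : ℤ) • pos p) = δ) ∧
            wtSum δ = 2 * (k : ℤ)},
          (Nat.card {e : κ → ℕ // (∑ p, (e p : ℤ) • pos p) = δ} : ℤ) •
            ((PowerSeries.X : PowerSeries ℤ) ^ k * KFA (hatP n lam) (hatP n mu + δ)) := by
  classical
  have hfin := setFin pos hpos2 k
  rw [finsum_mem_eq_finite_toFinset_sum _ hfin]
  -- transfer of decompositions along the reversal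
  have keyrev : ∀ (e : κ → ℕ) (δ : Wt m), (∑ p, (e p : ℤ) • pos p) = δ →
      (∑ p, ((e (prv p) : ℕ) : ℤ) • pos p) = revW δ := by
    intro e δ h
    have h2 : ∀ q, pos (prv.symm q) = revW (pos q) := by
      intro q
      have h3 := hprv (prv.symm q)
      rw [Equiv.apply_symm_apply] at h3
      rw [h3, revW_revW]
    rw [← Equiv.sum_comp prv.symm (fun p => ((e (prv p) : ℕ) : ℤ) • pos p)]
    simp only [Equiv.apply_symm_apply]
    rw [← h, ← revW_lincomb]
    exact Finset.sum_congr rfl fun q _ => by rw [h2]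
  have keyrev' : ∀ (e : κ → ℕ) (δ : Wt m), (∑ p, (e p : ℤ) • pos p) = revW δ →
      (∑ p, ((e (prv.symm p) : ℕ) : ℤ) • pos p) = δ := by
    intro e δ h
    have hS := keyrev (fun p => e (prv.symm p))
      (∑ p, ((e (prv.symm p) : ℕ) : ℤ) • pos p) rfl
    have hL : (∑ p, ((e (prv.symm (prv p)) : ℕ) : ℤ) • pos p) = revW δ := by
      rw [← h]
      exact Finset.sum_congr rfl fun q _ => by rw [Equiv.symm_apply_apply]
    rw [hL] at hS
    have h5 := congrArg revW hS
    rw [revW_revW, revW_revW] at h5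
    exact h5.symm
  -- invariance of the count under reversal
  have c_rev : ∀ δ : Wt m,
      Nat.card {e : κ → ℕ // (∑ p, (e p : ℤ) • pos p) = revW δ} =
      Nat.card {e : κ → ℕ // (∑ p, (e p : ℤ) • pos p) = δ} := by
    intro δ
    apply Nat.card_congr
    refine
      { toFun := fun x => ⟨fun p => x.1 (prv.symm p), keyrev' x.1 δ x.2⟩,
        invFun := fun x => ⟨fun p => x.1 (prv p), keyrev x.1 δ x.2⟩,
        left_inv := ?_, right_inv := ?_ }
    · rintro ⟨e, he⟩
      apply Subtype.ext
      funext p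
      simp [Equiv.symm_apply_apply]
    · rintro ⟨e, he⟩
      apply Subtype.ext
      funext p
      simp [Equiv.apply_symm_apply]
  -- membership is stable under reversal
  have mem_rev : ∀ δ ∈ hfin.toFinset, revW δ ∈ hfin.toFinset := by
    intro δ hδ
    rw [Set.Finite.mem_toFinset] at hδ ⊢
    obtain ⟨⟨e, he⟩, hs⟩ := hδ
    exact ⟨⟨fun p => e (prv p), keyrev e δ he⟩, by rw [wtSum_revW, hs]⟩
  -- expand each `PqPS` via `core19`
  have hstep : ∀ σ : Equiv.Perm (Fin m),
      PqPS v (castWt (pact σ (lam + rhoZ m) - mu - rhoZ m)) =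
      PowerSeries.X ^ k * ∑ δ ∈ hfin.toFinset,
        (Nat.card {e : κ → ℕ // (∑ p, (e p : ℤ) • pos p) = δ} : ℤ) •
          PqA (castWt ((pact σ (lam + rhoZ m) - mu - rhoZ m) + δ)) := by
    intro σ
    apply core19 pos hpos k hfin v hv1 hv2
    have h1 : wtSum (pact σ (lam + rhoZ m)) = wtSum lam + wtSum (rhoZ m) := by
      rw [wtSum_pact, wtSum_addW]
    rw [wtSum_subW, wtSum_subW, h1]
    linarith
  simp only [hstep]
  calc
    (∑ σ : Equiv.Perm (Fin m), (Equiv.Perm.sign σ : ℤ) •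
        (PowerSeries.X ^ k * ∑ δ ∈ hfin.toFinset,
          (Nat.card {e : κ → ℕ // (∑ p, (e p : ℤ) • pos p) = δ} : ℤ) •
            PqA (castWt ((pact σ (lam + rhoZ m) - mu - rhoZ m) + δ))))
      = ∑ σ : Equiv.Perm (Fin m), ∑ δ ∈ hfin.toFinset,
          (Equiv.Perm.sign σ : ℤ) •
            ((Nat.card {e : κ → ℕ // (∑ p, (e p : ℤ) • pos p) = δ} : ℤ) •
              (PowerSeries.X ^ k *
                PqA (castWt ((pact σ (lam + rhoZ m) - mu - rhoZ m) + δ)))) := by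
        refine Finset.sum_congr rfl fun σ _ => ?_
        rw [Finset.mul_sum, Finset.smul_sum]
        exact Finset.sum_congr rfl fun δ _ => by rw [mul_smul_comm]
    _ = ∑ δ ∈ hfin.toFinset, ∑ σ : Equiv.Perm (Fin m),
          (Equiv.Perm.sign σ : ℤ) •
            ((Nat.card {e : κ → ℕ // (∑ p, (e p : ℤ) • pos p) = δ} : ℤ) •
              (PowerSeries.X ^ k *
                PqA (castWt ((pact σ (lam + rhoZ m) - mu - rhoZ m) + δ)))) :=
        Finset.sum_comm
    _ = ∑ δ ∈ hfin.toFinset,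
          (Nat.card {e : κ → ℕ // (∑ p, (e p : ℤ) • pos p) = δ} : ℤ) •
            (PowerSeries.X ^ k * ∑ σ : Equiv.Perm (Fin m),
              (Equiv.Perm.sign σ : ℤ) •
                PqA (castWt ((pact σ (lam + rhoZ m) - mu - rhoZ m) + δ))) := by
        refine Finset.sum_congr rfl fun δ _ => ?_
        rw [Finset.mul_sum, Finset.smul_sum]
        refine Finset.sum_congr rfl fun σ _ => ?_
        rw [mul_smul_comm, smul_comm]
    _ = ∑ δ ∈ hfin.toFinset,
          (Nat.card {e : κ → ℕ // (∑ p, (e p : ℤ) • pos p) = δ} : ℤ) •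
            (PowerSeries.X ^ k * KFA (hatP n lam) (hatP n mu + revW δ)) := by
        refine Finset.sum_congr rfl fun δ _ => ?_
        rw [lemB]
    _ = ∑ δ ∈ hfin.toFinset,
          (Nat.card {e : κ → ℕ // (∑ p, (e p : ℤ) • pos p) = δ} : ℤ) •
            (PowerSeries.X ^ k * KFA (hatP n lam) (hatP n mu + δ)) := by
        refine Finset.sum_nbij' (i := fun δ => revW δ) (j := fun δ => revW δ)
          ?_ ?_ ?_ ?_ ?_
        · exact fun δ hδ => mem_rev δ hδ
        · exact fun δ hδ => mem_rev δ hδ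
        · exact fun δ _ => revW_revW δ
        · exact fun δ _ => revW_revW δ
        · intro δ hδ
          rw [c_rev δ]

end Assemble19


section Final19

variable {m : ℕ}

lemma revW_add (a b : Wt m) : revW (a + b) = revW a + revW b := by
  funext i; simp [revW]

lemma wtSum_posLT (p : IdxLT m) : wtSum (eps p.1.1 + eps p.1.2) = 2 := by
  rw [wtSum_addW, wtSum_eps, wtSum_eps]; norm_num

lemma wtSum_posLE (p : IdxLE m) : wtSum (eps p.1.1 + eps p.1.2) = 2 := by
  rw [wtSum_addW, wtSum_eps, wtSum_eps]; norm_num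

lemma pos_nonnegLT (p : IdxLT m) (i : Fin m) : 0 ≤ (eps p.1.1 + eps p.1.2) i := by
  simp only [Pi.add_apply, eps]
  split_ifs <;> norm_num

lemma pos_nonnegLE (p : IdxLE m) (i : Fin m) : 0 ≤ (eps p.1.1 + eps p.1.2) i := by
  simp only [Pi.add_apply, eps]
  split_ifs <;> norm_num

lemma hprvLT (p : IdxLT m) :
    (eps (pairRevLT m p).1.1 + eps (pairRevLT m p).1.2) = revW (eps p.1.1 + eps p.1.2) := by
  show eps p.1.2.rev + eps p.1.1.rev = _
  rw [revW_add, revW_eps, revW_eps, add_comm]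

lemma hprvLE (p : IdxLE m) :
    (eps (pairRevLE m p).1.1 + eps (pairRevLE m p).1.2) = revW (eps p.1.1 + eps p.1.2) := by
  show eps p.1.2.rev + eps p.1.1.rev = _
  rw [revW_add, revW_eps, revW_eps, add_comm]

end Final19

/-- For partitions `λ, μ` of length `m` with `|μ| - |λ| = 2k`,
`n = max(λ_1, μ_1)`, `λ̂ = (n-λ_m,…,n-λ_1)` and `μ̂ = (n-μ_m,…,n-μ_1)`:
`u_{λ,μ}(q) = Σ_{δ∈D_k^m} c_δ^{D_m} q^k K^{A_m}_{λ̂,μ̂+δ}(q)` and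
`U_{λ,μ}(q) = Σ_{δ∈C_k^m} c_δ^{C_m} q^k K^{A_m}_{λ̂,μ̂+δ}(q)`. -/
theorem stmt19 (m : ℕ) (hm : 1 ≤ m) (lam mu : Wt m) (hlam : IsPart lam) (hmu : IsPart mu)
    (k : ℕ) (hk : wtSum mu - wtSum lam = 2 * k)
    (n : ℤ) (hn : n = max (lam ⟨0, hm⟩) (mu ⟨0, hm⟩)) :
    uP lam mu =
      ∑ᶠ δ ∈ setD m k,
        (cD m δ : ℤ) •
          ((PowerSeries.X : PowerSeries ℤ) ^ k * KFA (hatP n lam) (hatP n mu + δ)) ∧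
    UP lam mu =
      ∑ᶠ δ ∈ setC m k,
        (cC m δ : ℤ) •
          ((PowerSeries.X : PowerSeries ℤ) ^ k * KFA (hatP n lam) (hatP n mu + δ)) := by
  constructor
  · exact assemble (fun p : IdxLT m => eps p.1.1 + eps p.1.2)
      (fun p => wtSum_posLT p) (fun p i => pos_nonnegLT p i)
      (pairRevLT m) (fun p => hprvLT p)
      (vfSmall m) (fun p => rfl) (fun j => rfl) lam mu k hk n
  · exact assemble (fun p : IdxLE m => eps p.1.1 + eps p.1.2)
      (fun p => wtSum_posLE p) (fun p i => pos_nonnegLE p i)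
      (pairRevLE m) (fun p => hprvLE p)
      (vfBig m) (fun p => rfl) (fun j => rfl) lam mu k hk n

end
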